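/- Let A ⊆ ℝ^n be a finite set of dimension n and codimension 1 whose exponent matrix A has rank n+1, with unique (up to scale) affine relation λ = (λ_a). Let h be heights such that the extended matrix A^h (A with the row (h_a) appended) has rank n+2. If c ∈ (ℝ*)^A is sign compatible with A (all c_a λ_a > 0 or all c_a λ_a < 0), then the critical system A·diag(c)·(t^{h_a} x^a)_a = 0 has exactly one solution (x,t) ∈ (ℝ_{>0})^{n+1}, and this solution is simple; if c is not sign compatible, there is no positive solution. -/

import Mathlib

open Matrix BigOperators

/-- Exponent matrix: columns `(1, a_j)`. -/
noncomputable def expMat (n s : ℕ) (a : Fin s → Fin n → ℝ) :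
    Matrix (Fin (n + 1)) (Fin s) ℝ :=
  Matrix.of fun i j => Fin.cases (motive := fun _ => ℝ) 1 (fun r => a j r) i

/-- The exponent matrix with the row of heights `h` appended. -/
noncomputable def expMatH (n : ℕ) (a : Fin (n + 2) → Fin n → ℝ) (h : Fin (n + 2) → ℝ) :
    Matrix (Fin (n + 2)) (Fin (n + 2)) ℝ :=
  Matrix.of fun i j =>
    Fin.lastCases (motive := fun _ => ℝ) (h j) (fun r => expMat n (n + 2) a r j) i

namespace CodimAux

variable {n : ℕ} (a : Fin (n + 2) → Fin n → ℝ) (h : Fin (n + 2) → ℝ)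

@[simp] lemma expMat_zero (j : Fin (n+2)) : expMat n (n+2) a 0 j = 1 := by
  simp [expMat]

@[simp] lemma expMat_succ (r : Fin n) (j : Fin (n+2)) :
    expMat n (n+2) a r.succ j = a j r := by
  simp [expMat]

@[simp] lemma expMatH_castSucc (i : Fin (n+1)) (j : Fin (n+2)) :
    expMatH n a h (Fin.castSucc i) j = expMat n (n+2) a i j := by
  simp [expMatH]

@[simp] lemma expMatH_last (j : Fin (n+2)) :
    expMatH n a h (Fin.last (n+1)) j = h j := by
  simp [expMatH]

/-- pack a scalar, a vector and a scalar into a `Fin (n+2)` vector. -/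
noncomputable def pack (σ : ℝ) (u : Fin n → ℝ) (τ : ℝ) : Fin (n+2) → ℝ :=
  fun i => Fin.lastCases (motive := fun _ => ℝ) τ
    (fun i' => Fin.cases (motive := fun _ => ℝ) σ u i') i

@[simp] lemma pack_zero (σ : ℝ) (u : Fin n → ℝ) (τ : ℝ) :
    pack σ u τ 0 = σ := by
  rw [show (0 : Fin (n+2)) = Fin.castSucc 0 by simp]
  unfold pack
  rw [Fin.lastCases_castSucc, Fin.cases_zero]

@[simp] lemma expMatH_zero (j : Fin (n+2)) : expMatH n a h 0 j = 1 := by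
  rw [show (0 : Fin (n+2)) = Fin.castSucc 0 by simp]
  rw [expMatH_castSucc]
  exact expMat_zero a j

@[simp] lemma pack_succ (σ : ℝ) (u : Fin n → ℝ) (τ : ℝ) (r : Fin n) :
    pack σ u τ (Fin.castSucc r.succ) = u r := by
  simp only [pack, Fin.lastCases_castSucc, Fin.cases_succ]

@[simp] lemma pack_last (σ : ℝ) (u : Fin n → ℝ) (τ : ℝ) :
    pack σ u τ (Fin.last (n+1)) = τ := by simp [pack]

lemma pack_decomp (W : Fin (n+2) → ℝ) :
    W = pack (W 0) (fun r => W (Fin.castSucc r.succ)) (W (Fin.last (n+1))) := by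
  funext i
  refine Fin.lastCases ?_ (fun i' => ?_) i
  · simp
  · refine Fin.cases ?_ (fun r => ?_) i' <;> simp [-Fin.castSucc_succ]

lemma mulVecT_pack (σ : ℝ) (u : Fin n → ℝ) (τ : ℝ) (j : Fin (n+2)) :
    (expMatH n a h)ᵀ.mulVec (pack σ u τ) j
      = σ + (∑ r, a j r * u r) + h j * τ := by
  simp only [Matrix.mulVec, dotProduct, Matrix.transpose_apply]
  rw [Fin.sum_univ_castSucc, Fin.sum_univ_succ]
  simp [-Fin.castSucc_succ]

lemma mulVecH_castSucc (v : Fin (n+2) → ℝ) (i : Fin (n+1)) :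
    (expMatH n a h).mulVec v (Fin.castSucc i) = (expMat n (n+2) a).mulVec v i := by
  simp [Matrix.mulVec, dotProduct]

lemma mulVecH_last (v : Fin (n+2) → ℝ) :
    (expMatH n a h).mulVec v (Fin.last (n+1)) = ∑ j, h j * v j := by
  simp [Matrix.mulVec, dotProduct]

lemma bij_of_rank {m : ℕ} (M : Matrix (Fin m) (Fin m) ℝ) (hr : M.rank = m) :
    Function.Bijective M.mulVecLin := by
  have h1 : Module.finrank ℝ (LinearMap.range M.mulVecLin) = m := hr
  have hsurj : Function.Surjective M.mulVecLin := by
    rw [← LinearMap.range_eq_top]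
    apply Submodule.eq_top_of_finrank_eq
    rw [h1, Module.finrank_fintype_fun_eq_card, Fintype.card_fin]
  exact ⟨LinearMap.injective_iff_surjective.mpr hsurj, hsurj⟩

lemma kernel_scalar (hMinj : Function.Injective (expMatH n a h).mulVecLin)
    (lam : Fin (n+2) → ℝ) (hlam : lam ≠ 0)
    (hker : (expMat n (n+2) a).mulVec lam = 0)
    (v : Fin (n+2) → ℝ) (hv : (expMat n (n+2) a).mulVec v = 0) :
    ∃ s : ℝ, v = s • lam := by
  have hμ0 : (∑ j, h j * lam j) ≠ 0 := by
    intro h0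
    apply hlam
    have : (expMatH n a h).mulVecLin lam = (expMatH n a h).mulVecLin 0 := by
      simp only [Matrix.mulVecLin_apply, Matrix.mulVec_zero]
      funext i
      refine Fin.lastCases ?_ (fun i' => ?_) i
      · rw [mulVecH_last]; exact h0
      · rw [mulVecH_castSucc, hker]; rfl
    exact hMinj this
  refine ⟨(∑ j, h j * v j) / (∑ j, h j * lam j), ?_⟩
  apply hMinj
  simp only [Matrix.mulVecLin_apply]
  rw [Matrix.mulVec_smul]
  funext i
  refine Fin.lastCases ?_ (fun i' => ?_) i
  · rw [mulVecH_last]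
    simp only [Pi.smul_apply, smul_eq_mul, mulVecH_last]
    rw [div_mul_cancel₀ _ hμ0]
  · rw [mulVecH_castSucc, hv]
    simp only [Pi.smul_apply, smul_eq_mul, mulVecH_castSucc (a := a) (h := h)]
    rw [hker]
    simp

lemma sol_scalar (c : Fin (n+2) → ℝ) (hc : ∀ i, c i ≠ 0)
    (hMinj : Function.Injective (expMatH n a h).mulVecLin)
    (lam : Fin (n+2) → ℝ) (hlam : lam ≠ 0)
    (hker : (expMat n (n+2) a).mulVec lam = 0)
    (z : (Fin n → ℝ) × ℝ) (hx : ∀ r, 0 < z.1 r) (ht : 0 < z.2)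
    (hz : ∀ i, ∑ j, expMat n (n+2) a i j * (c j * z.2 ^ h j * ∏ r, z.1 r ^ a j r) = 0) :
    ∃ s : ℝ, s ≠ 0 ∧ (∀ j, lam j ≠ 0) ∧
      (∀ j, c j * z.2 ^ h j * ∏ r, z.1 r ^ a j r = s * lam j) ∧
      (∀ j, 0 < s * (c j * lam j)) := by
  set v : Fin (n+2) → ℝ := fun j => c j * z.2 ^ h j * ∏ r, z.1 r ^ a j r with hvdef
  have hvpos : ∀ j, 0 < c j * v j := by
    intro j
    have h1 : 0 < z.2 ^ h j := Real.rpow_pos_of_pos ht _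
    have h2 : 0 < ∏ r, z.1 r ^ a j r :=
      Finset.prod_pos fun r _ => Real.rpow_pos_of_pos (hx r) _
    have h3 : 0 < c j ^ 2 := sq_pos_of_ne_zero (hc j)
    calc (0:ℝ) < c j ^ 2 * (z.2 ^ h j * ∏ r, z.1 r ^ a j r) :=
          mul_pos h3 (mul_pos h1 h2)
      _ = c j * v j := by rw [hvdef]; ring
  have hAv : (expMat n (n+2) a).mulVec v = 0 := by
    funext i
    simpa [Matrix.mulVec, dotProduct] using hz i
  obtain ⟨s, hs⟩ := kernel_scalar a h hMinj lam hlam hker v hAv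
  have hsv : ∀ j, v j = s * lam j := fun j => by
    have := congrFun hs j; simpa using this
  have hvne : ∀ j, v j ≠ 0 := fun j => by
    intro h0
    have := hvpos j
    rw [h0, mul_zero] at this
    exact lt_irrefl _ this
  have hsne : s ≠ 0 := by
    intro h0
    exact hvne 0 (by rw [hsv 0, h0, zero_mul])
  have hlamne : ∀ j, lam j ≠ 0 := fun j => by
    intro h0
    exact hvne j (by rw [hsv j, h0, mul_zero])
  refine ⟨s, hsne, hlamne, hsv, fun j => ?_⟩
  have := hvpos j
  rw [hsv j] at this
  nlinarith [this]

lemma deriv_bij (c : Fin (n+2) → ℝ) (hc : ∀ i, c i ≠ 0)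
    (hMinj : Function.Injective (expMatH n a h).mulVecLin)
    (hMTinj : Function.Injective (expMatH n a h)ᵀ.mulVecLin)
    (lam : Fin (n+2) → ℝ) (hlam : lam ≠ 0)
    (hker : (expMat n (n+2) a).mulVec lam = 0)
    (z : (Fin n → ℝ) × ℝ) (hx : ∀ r, 0 < z.1 r) (ht : 0 < z.2)
    (s : ℝ) (hs : s ≠ 0) (hlamne : ∀ j, lam j ≠ 0)
    (hv : ∀ j, c j * z.2 ^ h j * ∏ r, z.1 r ^ a j r = s * lam j) :
    Function.Bijective (fderiv ℝ
      (fun z : (Fin n → ℝ) × ℝ => fun i : Fin (n+1) =>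
        ∑ j, expMat n (n+2) a i j * (c j * z.2 ^ h j * ∏ r, z.1 r ^ a j r)) z) := by
  classical
  set v : Fin (n+2) → ℝ := fun j => c j * z.2 ^ h j * ∏ r, z.1 r ^ a j r with hvdef
  set D : Fin (n+2) → ((Fin n → ℝ) × ℝ →L[ℝ] ℝ) := fun j =>
    v j • ((h j / z.2) • ContinuousLinearMap.snd ℝ (Fin n → ℝ) ℝ +
      ∑ r, (a j r / z.1 r) •
        ((ContinuousLinearMap.proj r).comp (ContinuousLinearMap.fst ℝ (Fin n → ℝ) ℝ))) with hDdef
  have hD_apply : ∀ j (p : (Fin n → ℝ) × ℝ),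
      D j p = v j * ((h j / z.2) * p.2 + ∑ r, (a j r / z.1 r) * p.1 r) := by
    intro j p
    simp only [hDdef, ContinuousLinearMap.add_apply, ContinuousLinearMap.smul_apply,
      ContinuousLinearMap.sum_apply, ContinuousLinearMap.comp_apply,
      ContinuousLinearMap.coe_fst', ContinuousLinearMap.proj_apply,
      ContinuousLinearMap.coe_snd', smul_eq_mul]
  have hDj : ∀ j, HasFDerivAt
      (fun z : (Fin n → ℝ) × ℝ => c j * z.2 ^ h j * ∏ r, z.1 r ^ a j r) (D j) z := by
    intro j
    have h1 : HasFDerivAt (fun z : (Fin n → ℝ) × ℝ => z.2 ^ h j)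
        ((h j * z.2 ^ (h j - 1)) • ContinuousLinearMap.snd ℝ (Fin n → ℝ) ℝ) z :=
      (Real.hasDerivAt_rpow_const (Or.inl ht.ne')).comp_hasFDerivAt z hasFDerivAt_snd
    have h2 : ∀ r : Fin n, HasFDerivAt (fun z : (Fin n → ℝ) × ℝ => z.1 r ^ a j r)
        ((a j r * z.1 r ^ (a j r - 1)) •
          ((ContinuousLinearMap.proj r).comp (ContinuousLinearMap.fst ℝ (Fin n → ℝ) ℝ))) z :=
      fun r => by
        have := (Real.hasDerivAt_rpow_const (p := a j r) (x := z.1 r) (Or.inl (hx r).ne')).comp_hasFDerivAt z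
          (((ContinuousLinearMap.proj r).comp
            (ContinuousLinearMap.fst ℝ (Fin n → ℝ) ℝ)).hasFDerivAt)
        exact this
    have hP : HasFDerivAt (fun z : (Fin n → ℝ) × ℝ => ∏ r, z.1 r ^ a j r)
        (∑ r, (∏ r' ∈ Finset.univ.erase r, z.1 r' ^ a j r') •
          ((a j r * z.1 r ^ (a j r - 1)) •
            ((ContinuousLinearMap.proj r).comp (ContinuousLinearMap.fst ℝ (Fin n → ℝ) ℝ)))) z :=
      HasFDerivAt.finset_prod (fun r _ => h2 r)
    have hmul := (h1.const_mul (c j)).mul hP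
    refine hmul.congr_fderiv ?_
    symm
    apply ContinuousLinearMap.ext
    intro p
    have hXne : ∀ r : Fin n, z.1 r ^ a j r ≠ 0 :=
      fun r => (Real.rpow_pos_of_pos (hx r) _).ne'
    have er : ∀ r : Fin n, ∏ r' ∈ Finset.univ.erase r, z.1 r' ^ a j r'
        = (∏ r' : Fin n, z.1 r' ^ a j r') / z.1 r ^ a j r := by
      intro r
      rw [eq_div_iff (hXne r)]
      exact Finset.prod_erase_mul _ _ (Finset.mem_univ r)
    have sub1 : ∀ r : Fin n, z.1 r ^ (a j r - 1) = z.1 r ^ a j r / z.1 r :=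
      fun r => Real.rpow_sub_one (hx r).ne' _
    have sub2 : z.2 ^ (h j - 1) = z.2 ^ h j / z.2 := Real.rpow_sub_one ht.ne' _
    simp only [hD_apply, hvdef, ContinuousLinearMap.add_apply, ContinuousLinearMap.smul_apply,
      ContinuousLinearMap.sum_apply, ContinuousLinearMap.comp_apply,
      ContinuousLinearMap.coe_fst', ContinuousLinearMap.proj_apply,
      ContinuousLinearMap.coe_snd', smul_eq_mul, er, sub1, sub2]
    rw [mul_add, Finset.mul_sum, Finset.mul_sum, add_comm]
    congr 1
    · refine Finset.sum_congr rfl fun r _ => ?_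
      field_simp [(hx r).ne', hXne r]
    · field_simp [ht.ne', (Real.rpow_pos_of_pos ht (h j)).ne']
  set L : (Fin n → ℝ) × ℝ →L[ℝ] (Fin (n+1) → ℝ) :=
    ContinuousLinearMap.pi (fun i => ∑ j, (expMat n (n+2) a i j) • D j) with hLdef
  have hG : HasFDerivAt
      (fun z : (Fin n → ℝ) × ℝ => fun i : Fin (n+1) =>
        ∑ j, expMat n (n+2) a i j * (c j * z.2 ^ h j * ∏ r, z.1 r ^ a j r)) L z := by
    rw [hLdef]
    apply hasFDerivAt_pi.mpr
    intro i
    exact HasFDerivAt.fun_sum (fun j _ => (hDj j).const_mul (expMat n (n+2) a i j))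
  rw [hG.fderiv]
  have hL_apply : ∀ (p : (Fin n → ℝ) × ℝ) (i : Fin (n+1)),
      L p i = ∑ j, expMat n (n+2) a i j * D j p := by
    intro p i
    simp [hLdef, ContinuousLinearMap.sum_apply]
  have hinj : Function.Injective L := by
    have h0 : ∀ p : (Fin n → ℝ) × ℝ, L p = 0 → p = 0 := by
      intro p hp
      set q : Fin (n+2) → ℝ := fun j => (h j / z.2) * p.2 + ∑ r, (a j r / z.1 r) * p.1 r
        with hqdef
      have hAq : (expMat n (n+2) a).mulVec (fun j => v j * q j) = 0 := by
        funext i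
        have h1 := congrFun hp i
        rw [hL_apply] at h1
        simp only [Matrix.mulVec, dotProduct]
        simp only [Pi.zero_apply] at h1 ⊢
        rw [← h1]
        refine Finset.sum_congr rfl fun j _ => ?_
        rw [hD_apply, hqdef]
      obtain ⟨κ, hκ⟩ := kernel_scalar a h hMinj lam hlam hker _ hAq
      have hq : ∀ j, q j = κ / s := by
        intro j
        have h1 : v j * q j = κ * lam j := by
          have := congrFun hκ j; simpa using this
        rw [hvdef] at h1
        simp only at h1
        rw [hv j] at h1
        have h2 : (s * q j) * lam j = κ * lam j := by rw [← h1]; ring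
        have h3 : s * q j = κ := mul_right_cancel₀ (hlamne j) h2
        field_simp [hs]
        linarith [h3]
      have hW : (expMatH n a h)ᵀ.mulVec
          (pack (-(κ/s)) (fun r => p.1 r / z.1 r) (p.2 / z.2)) = 0 := by
        funext j
        rw [mulVecT_pack]
        have h1 := hq j
        rw [hqdef] at h1
        simp only at h1
        have e1 : ∑ r, a j r * (p.1 r / z.1 r) = ∑ r, (a j r / z.1 r) * p.1 r :=
          Finset.sum_congr rfl fun r _ => by ring
        have e2 : h j * (p.2 / z.2) = h j / z.2 * p.2 := by ring
        rw [e1, e2]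
        simp only [Pi.zero_apply]
        linarith [h1]
      have hW0 : pack (-(κ/s)) (fun r => p.1 r / z.1 r) (p.2 / z.2) = 0 := by
        apply hMTinj
        simp only [Matrix.mulVecLin_apply, hW, Matrix.mulVec_zero]
      have hp1 : ∀ r, p.1 r = 0 := by
        intro r
        have := congrFun hW0 (Fin.castSucc r.succ)
        rw [pack_succ] at this
        simp only [Pi.zero_apply] at this
        exact (div_eq_zero_iff.mp this).resolve_right (hx r).ne'
      have hp2 : p.2 = 0 := by
        have := congrFun hW0 (Fin.last (n+1))
        rw [pack_last] at this
        simp only [Pi.zero_apply] at this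
        exact (div_eq_zero_iff.mp this).resolve_right ht.ne'
      exact Prod.ext (funext hp1) hp2
    intro p p' hpp
    have : p - p' = 0 := h0 _ (by rw [map_sub, hpp, sub_self])
    exact sub_eq_zero.mp this
  refine ⟨hinj, ?_⟩
  have hfr : Module.finrank ℝ ((Fin n → ℝ) × ℝ) = Module.finrank ℝ (Fin (n+1) → ℝ) := by
    simp [Module.finrank_prod, Module.finrank_fintype_fun_eq_card]
  exact (LinearMap.injective_iff_surjective_of_finrank_eq_finrank
    (f := (L : (Fin n → ℝ) × ℝ →ₗ[ℝ] (Fin (n+1) → ℝ))) hfr).mp hinj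

end CodimAux

/-- Codimension-1 critical system: with `rank A = n+1`, `rank A^h = n+2`, the critical system
of the Viro polynomial has exactly one positive solution `(x,t)`, which is simple, when the
coefficients are sign compatible; otherwise no positive solution. -/
theorem codim_one_critical_system (n : ℕ)
    (a : Fin (n + 2) → Fin n → ℝ)
    (hrank : (expMat n (n + 2) a).rank = n + 1)
    (lam : Fin (n + 2) → ℝ) (hlam : lam ≠ 0)
    (hker : (expMat n (n + 2) a).mulVec lam = 0)
    (h : Fin (n + 2) → ℝ) (hrankH : (expMatH n a h).rank = n + 2)
    (c : Fin (n + 2) → ℝ) (hc : ∀ i, c i ≠ 0) :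
    let G : (Fin n → ℝ) × ℝ → Fin (n + 1) → ℝ := fun z i =>
      ∑ j, expMat n (n + 2) a i j * (c j * z.2 ^ h j * ∏ r, z.1 r ^ a j r)
    let Pos : (Fin n → ℝ) × ℝ → Prop := fun z => (∀ r, 0 < z.1 r) ∧ 0 < z.2
    (((∀ i, 0 < c i * lam i) ∨ (∀ i, c i * lam i < 0)) →
      (∃! z : (Fin n → ℝ) × ℝ, Pos z ∧ G z = 0) ∧
      ∀ z : (Fin n → ℝ) × ℝ, Pos z ∧ G z = 0 →
        Function.Bijective (fderiv ℝ G z)) ∧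
    ((¬ ((∀ i, 0 < c i * lam i) ∨ (∀ i, c i * lam i < 0))) →
      ¬ ∃ z : (Fin n → ℝ) × ℝ, Pos z ∧ G z = 0) := by
  classical
  intro G Pos
  have hbij : Function.Bijective (expMatH n a h).mulVecLin :=
    CodimAux.bij_of_rank _ hrankH
  have hMinj := hbij.1
  have hTbij : Function.Bijective (expMatH n a h)ᵀ.mulVecLin :=
    CodimAux.bij_of_rank _ (by rw [Matrix.rank_transpose]; exact hrankH)
  -- log/exp identity used in both directions
  have hval : ∀ (x : Fin n → ℝ) (t : ℝ), (∀ r, 0 < x r) → 0 < t → ∀ j,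
      c j * t ^ h j * ∏ r, x r ^ a j r
        = c j * Real.exp (h j * Real.log t + ∑ r, a j r * Real.log (x r)) := by
    intro x t hx ht j
    have e1 : t ^ h j = Real.exp (h j * Real.log t) := by
      rw [Real.rpow_def_of_pos ht, mul_comm]
    have e2 : ∀ r : Fin n, x r ^ a j r = Real.exp (a j r * Real.log (x r)) := fun r => by
      rw [Real.rpow_def_of_pos (hx r), mul_comm]
    rw [e1, Real.exp_add, Real.exp_sum, Finset.prod_congr rfl fun r _ => e2 r]
    ring
  have hGapp : ∀ (z : (Fin n → ℝ) × ℝ), G z = 0 →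
      ∀ i, ∑ j, expMat n (n+2) a i j * (c j * z.2 ^ h j * ∏ r, z.1 r ^ a j r) = 0 := by
    intro z hz i
    have h1 := congrFun hz i
    simp only [Pi.zero_apply] at h1
    exact h1
  constructor
  · intro hcompat
    obtain ⟨ε, hεpm, hεsc⟩ : ∃ ε : ℝ, (ε * ε = 1) ∧ ∀ j, 0 < ε * (c j * lam j) := by
      rcases hcompat with H | H
      · exact ⟨1, by norm_num, fun j => by simpa using H j⟩
      · exact ⟨-1, by norm_num, fun j => by nlinarith [H j]⟩
    have hbpos : ∀ j, 0 < ε * lam j / c j := by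
      intro j
      have h1 : ε * lam j / c j = (ε * (c j * lam j)) / (c j) ^ 2 := by
        rw [div_eq_div_iff (hc j) (pow_ne_zero 2 (hc j))]
        ring
      rw [h1]
      exact div_pos (hεsc j) (sq_pos_of_ne_zero (hc j))
    set b : Fin (n+2) → ℝ := fun j => Real.log (ε * lam j / c j) with hbdef
    obtain ⟨W₀, hW₀⟩ := hTbij.2 b
    set σ' := W₀ 0 with hσ
    set u : Fin n → ℝ := fun r => W₀ (Fin.castSucc r.succ) with hu
    set τ := W₀ (Fin.last (n+1)) with hτ
    have hWp : W₀ = CodimAux.pack σ' u τ := CodimAux.pack_decomp W₀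
    have hWsys : ∀ j, σ' + (∑ r, a j r * u r) + h j * τ = b j := by
      intro j
      have h1 : (expMatH n a h)ᵀ.mulVec W₀ = b := hW₀
      have h2 := congrFun h1 j
      rw [hWp, CodimAux.mulVecT_pack] at h2
      exact h2
    set z₀ : (Fin n → ℝ) × ℝ := (fun r => Real.exp (u r), Real.exp τ) with hz₀
    have hz₀pos : Pos z₀ := ⟨fun r => Real.exp_pos _, Real.exp_pos _⟩
    have hveq : ∀ j, c j * z₀.2 ^ h j * ∏ r, z₀.1 r ^ a j r
        = (ε * Real.exp (-σ')) * lam j := by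
      intro j
      rw [hval _ _ (fun r => Real.exp_pos _) (Real.exp_pos _) j]
      simp only [hz₀, Real.log_exp]
      have h3 : h j * τ + ∑ r, a j r * u r = b j - σ' := by linarith [hWsys j]
      rw [h3, hbdef]
      simp only
      rw [Real.exp_sub, Real.exp_log (hbpos j), Real.exp_neg]
      field_simp
      rw [mul_assoc]
      exact mul_div_cancel_left₀ _ (hc j)
    have hGz₀ : G z₀ = 0 := by
      funext i
      have hAlam : ∑ j, expMat n (n+2) a i j * lam j = 0 := by
        have h1 := congrFun hker i
        simpa [Matrix.mulVec, dotProduct] using h1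
      have h2 : ∑ j, expMat n (n+2) a i j * (c j * z₀.2 ^ h j * ∏ r, z₀.1 r ^ a j r) = 0 := by
        calc ∑ j, expMat n (n+2) a i j * (c j * z₀.2 ^ h j * ∏ r, z₀.1 r ^ a j r)
            = ∑ j, (ε * Real.exp (-σ')) * (expMat n (n+2) a i j * lam j) :=
              Finset.sum_congr rfl fun j _ => by rw [hveq j]; ring
          _ = (ε * Real.exp (-σ')) * ∑ j, expMat n (n+2) a i j * lam j := by
              rw [Finset.mul_sum]
          _ = 0 := by rw [hAlam, mul_zero]
      show _ = (0 : Fin (n+1) → ℝ) i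
      simp only [Pi.zero_apply]
      exact h2
    have huniq : ∀ z', Pos z' ∧ G z' = 0 → z' = z₀ := by
      rintro z' ⟨⟨hx', ht'⟩, hGz'⟩
      obtain ⟨s, hsne, hlamne, hsv, hssign⟩ :=
        CodimAux.sol_scalar a h c hc hMinj lam hlam hker z' hx' ht' (hGapp z' hGz')
      have hεs : 0 < ε * s := by
        nlinarith [hssign 0, hεsc 0, sq_nonneg (c 0 * lam 0)]
      have hW' : (expMatH n a h)ᵀ.mulVec
          (CodimAux.pack (-(Real.log (ε * s))) (fun r => Real.log (z'.1 r))
            (Real.log z'.2)) = b := by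
        funext j
        rw [CodimAux.mulVecT_pack]
        have h1 : c j * Real.exp (h j * Real.log z'.2 + ∑ r, a j r * Real.log (z'.1 r))
            = s * lam j := by
          rw [← hval _ _ hx' ht' j]; exact hsv j
        have h2 : Real.exp (h j * Real.log z'.2 + ∑ r, a j r * Real.log (z'.1 r))
            = (ε * s) * (ε * lam j / c j) := by
          have h2a : Real.exp (h j * Real.log z'.2 + ∑ r, a j r * Real.log (z'.1 r))
              = s * lam j / c j := by
            rw [eq_div_iff (hc j)]
            linarith [h1]
          rw [h2a, show (ε * s) * (ε * lam j / c j) = (ε * ε) * (s * lam j / c j) by ring,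
            hεpm, one_mul]
        have h3 : h j * Real.log z'.2 + ∑ r, a j r * Real.log (z'.1 r)
            = Real.log (ε * s) + b j := by
          rw [← Real.log_exp (h j * Real.log z'.2 + ∑ r, a j r * Real.log (z'.1 r)), h2,
            Real.log_mul hεs.ne' (hbpos j).ne']
        linarith [h3]
      have hWW : CodimAux.pack (-(Real.log (ε * s))) (fun r => Real.log (z'.1 r))
          (Real.log z'.2) = W₀ := by
        apply hTbij.1
        rw [Matrix.mulVecLin_apply, hW', ← hW₀]
      have ht2 : z'.2 = Real.exp τ := by
        have h4 := congrFun hWW (Fin.last (n+1))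
        rw [CodimAux.pack_last] at h4
        rw [← hτ] at h4
        rw [← Real.exp_log ht', h4]
      have hx2 : ∀ r, z'.1 r = Real.exp (u r) := by
        intro r
        have h4 := congrFun hWW (Fin.castSucc r.succ)
        rw [CodimAux.pack_succ] at h4
        have h5 : W₀ (Fin.castSucc r.succ) = u r := by rw [hu]
        rw [h5] at h4
        rw [← Real.exp_log (hx' r), h4]
      exact Prod.ext (funext hx2) ht2
    refine ⟨⟨z₀, ⟨hz₀pos, hGz₀⟩, huniq⟩, ?_⟩
    rintro z ⟨⟨hxz, htz⟩, hGz⟩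
    obtain ⟨s, hsne, hlamne, hsv, _⟩ :=
      CodimAux.sol_scalar a h c hc hMinj lam hlam hker z hxz htz (hGapp z hGz)
    exact CodimAux.deriv_bij a h c hc hMinj hTbij.1 lam hlam hker z hxz htz s hsne hlamne hsv
  · rintro hnc ⟨z', ⟨hx', ht'⟩, hGz'⟩
    obtain ⟨s, hsne, hlamne, hsv, hssign⟩ :=
      CodimAux.sol_scalar a h c hc hMinj lam hlam hker z' hx' ht' (hGapp z' hGz')
    apply hnc
    rcases lt_or_gt_of_ne hsne with hneg | hpos
    · right; intro i; nlinarith [hssign i]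
    · left; intro i; nlinarith [hssign i]
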